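/- Let S be a d-dimensional symmetric α-stable random vector with α ∈ (0,2] and let B be a Beta(β,γ) random variable (β,γ > 0) independent of S. Then η = (−log B)^(1/α) · S has characteristic function E[exp(i⟨η,u⟩)] = B(β + ‖u‖^α, γ)/B(β, γ), i.e. the Beta kernel K(u) = B(β+‖u‖^α, γ)/B(β,γ) is the characteristic function of η and hence positive definite on ℝ^d for every d ≥ 1. -/

import Mathlib

open MeasureTheory ProbabilityTheory Real
open scoped ENNReal NNReal

/-- The Beta function `B(a,b) = Γ(a)Γ(b)/Γ(a+b)`. -/
noncomputable def realBeta (a b : ℝ) : ℝ := Real.Gamma a * Real.Gamma b / Real.Gamma (a + b)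

/-- The Beta(β,γ) distribution on `ℝ`. -/
noncomputable def betaMeasure (β γ : ℝ) : Measure ℝ :=
  volume.withDensity (fun x => ENNReal.ofReal
    (if x ∈ Set.Ioo (0:ℝ) 1 then x ^ (β-1) * (1-x) ^ (γ-1) / realBeta β γ else 0))

lemma realBeta_eq_integral {a b : ℝ} (ha : 0 < a) (hb : 0 < b) :
    realBeta a b = ∫ x in Set.Ioo (0:ℝ) 1, x ^ (a-1) * (1-x) ^ (b-1) := by
  have h := Complex.Gamma_mul_Gamma_eq_betaIntegral (s := (a:ℂ)) (t := (b:ℂ))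
    (by simpa using ha) (by simpa using hb)
  have hbeta : Complex.betaIntegral a b
      = ((∫ x in Set.Ioo (0:ℝ) 1, x ^ (a-1) * (1-x) ^ (b-1) : ℝ) : ℂ) := by
    rw [Complex.betaIntegral, intervalIntegral.integral_of_le zero_le_one,
      ← MeasureTheory.integral_Ioc_eq_integral_Ioo]
    have : ∫ (x : ℝ) in Set.Ioc (0:ℝ) 1, (x:ℂ) ^ ((a:ℂ) - 1) * (1 - (x:ℂ)) ^ ((b:ℂ) - 1)
        = ∫ (x : ℝ) in Set.Ioc (0:ℝ) 1, ((x ^ (a-1) * (1-x) ^ (b-1) : ℝ) : ℂ) := by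
      apply setIntegral_congr_ae measurableSet_Ioc
      filter_upwards [] with x
      intro hx
      have hx0 : (0:ℝ) ≤ x := le_of_lt hx.1
      have hx1 : (0:ℝ) ≤ 1 - x := by linarith [hx.2]
      rw [Complex.ofReal_mul, Complex.ofReal_cpow hx0, Complex.ofReal_cpow hx1]
      push_cast
      ring
    rw [this]
    exact integral_ofReal
  rw [hbeta, show ((a:ℂ) + b) = ((a + b : ℝ) : ℂ) by push_cast; ring,
    Complex.Gamma_ofReal, Complex.Gamma_ofReal, Complex.Gamma_ofReal] at h
  have h3 : Real.Gamma a * Real.Gamma b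
      = Real.Gamma (a+b) * ∫ x in Set.Ioo (0:ℝ) 1, x ^ (a-1) * (1-x) ^ (b-1) := by
    exact_mod_cast h
  have hpos : Real.Gamma (a+b) ≠ 0 := (Real.Gamma_pos_of_pos (by linarith)).ne'
  rw [realBeta, h3]
  field_simp


lemma realBeta_pos {a b : ℝ} (ha : 0 < a) (hb : 0 < b) : 0 < realBeta a b :=
  div_pos (mul_pos (Real.Gamma_pos_of_pos ha) (Real.Gamma_pos_of_pos hb))
    (Real.Gamma_pos_of_pos (by linarith))

lemma betaMeasure_compl (β γ : ℝ) : _root_.betaMeasure β γ (Set.Ioo (0:ℝ) 1)ᶜ = 0 := by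
  rw [_root_.betaMeasure, withDensity_apply _ measurableSet_Ioo.compl]
  have h0 : ∀ x ∈ (Set.Ioo (0:ℝ) 1)ᶜ, ENNReal.ofReal
      (if x ∈ Set.Ioo (0:ℝ) 1 then x ^ (β-1) * (1-x) ^ (γ-1) / realBeta β γ else 0)
      = (0:ℝ≥0∞) := by
    intro x hx
    rw [if_neg (by simpa using hx)]
    simp
  rw [setLIntegral_congr_fun measurableSet_Ioo.compl h0]
  simp

lemma betaMeasure_moment {β γ t : ℝ} (hβ : 0 < β) (hγ : 0 < γ) (ht : 0 ≤ t) :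
    ∫ b, b ^ t ∂(_root_.betaMeasure β γ) = realBeta (β + t) γ / realBeta β γ := by
  have hBpos := realBeta_pos hβ hγ
  set g : ℝ → ℝ := fun x =>
    if x ∈ Set.Ioo (0:ℝ) 1 then x ^ (β-1) * (1-x) ^ (γ-1) / realBeta β γ else 0 with hg
  have hgmeas : Measurable g := by
    apply Measurable.ite measurableSet_Ioo _ measurable_const
    exact ((measurable_id'.pow_const _).mul
      ((measurable_const.sub measurable_id').pow_const _)).div_const _
  have hmeas : Measurable fun x => (g x).toNNReal := hgmeas.real_toNNReal
  have : _root_.betaMeasure β γ = volume.withDensity (fun x => ((g x).toNNReal : ℝ≥0∞)) := rfl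
  rw [this, integral_withDensity_eq_integral_smul hmeas]
  have heq : ∀ x : ℝ, (g x).toNNReal • (x ^ t : ℝ)
      = Set.indicator (Set.Ioo (0:ℝ) 1)
          (fun x => x ^ (β+t-1) * (1-x) ^ (γ-1) / realBeta β γ) x := by
    intro x
    rw [NNReal.smul_def, smul_eq_mul]
    by_cases hx : x ∈ Set.Ioo (0:ℝ) 1
    · rw [Set.indicator_of_mem hx, hg]
      simp only [hx, if_true]
      have hx0 : 0 < x := hx.1
      have hx1 : 0 < 1 - x := by linarith [hx.2]
      rw [Real.coe_toNNReal _ (by positivity)]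
      rw [show β + t - 1 = (β - 1) + t by ring, Real.rpow_add hx0]
      ring
    · rw [Set.indicator_of_notMem hx, hg]
      simp [hx]
  rw [integral_congr_ae (Filter.Eventually.of_forall heq),
    integral_indicator measurableSet_Ioo]
  have : ∫ x in Set.Ioo (0:ℝ) 1, x ^ (β+t-1) * (1-x) ^ (γ-1) / realBeta β γ
      = (∫ x in Set.Ioo (0:ℝ) 1, x ^ ((β+t)-1) * (1-x) ^ (γ-1)) / realBeta β γ := by
    rw [← integral_div]
  rw [this, ← realBeta_eq_integral (by linarith) hγ]

lemma norm_exp_I_mul_ofReal (r : ℝ) : ‖Complex.exp (Complex.I * r)‖ = 1 := by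
  rw [mul_comm, Complex.norm_exp_ofReal_mul_I]

lemma conj_exp_I_mul_ofReal (r : ℝ) :
    (starRingEnd ℂ) (Complex.exp (Complex.I * r)) = Complex.exp (-(Complex.I * r)) := by
  rw [← Complex.exp_conj]
  congr 1
  simp [Complex.conj_I]


set_option maxHeartbeats 1000000 in
/-- `η = (-log B)^(1/α) • S` has characteristic function
`B(β+‖u‖^α,γ)/B(β,γ)`; in particular this Beta kernel is positive definite on `ℝ^d`
for every `d ≥ 1`. -/
theorem stmt8 {d : ℕ} {Ω : Type*} [MeasurableSpace Ω] (μ : Measure Ω) [IsProbabilityMeasure μ]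
    (α β γ : ℝ) (hα : α ∈ Set.Ioc (0:ℝ) 2) (hβ : 0 < β) (hγ : 0 < γ)
    (S : Ω → EuclideanSpace ℝ (Fin d)) (B : Ω → ℝ)
    (hSmeas : Measurable S) (hBmeas : Measurable B)
    (hS : ∀ u : EuclideanSpace ℝ (Fin d),
      ∫ ω, Complex.exp (Complex.I * (inner ℝ (S ω) u : ℝ)) ∂μ = Real.exp (-(‖u‖ ^ α)))
    (hB : μ.map B = _root_.betaMeasure β γ)
    (hindep : IndepFun B S μ) :
    (∀ u : EuclideanSpace ℝ (Fin d),
      ∫ ω, Complex.exp (Complex.I *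
          (inner ℝ ((-Real.log (B ω)) ^ (1/α) • S ω) u : ℝ)) ∂μ
        = (realBeta (β + ‖u‖ ^ α) γ / realBeta β γ : ℝ))
    ∧ ∀ (N : ℕ) (x : Fin N → EuclideanSpace ℝ (Fin d)) (z : Fin N → ℝ),
        0 ≤ ∑ i, ∑ j, z i * z j * (realBeta (β + ‖x i - x j‖ ^ α) γ / realBeta β γ) := by
  obtain ⟨hα0, hα2⟩ := hα
  set c : ℝ → ℝ := fun b => (-Real.log b) ^ (1/α) with hc
  have hcmeas : Measurable c := (Real.measurable_log.neg).pow_const _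
  haveI : IsProbabilityMeasure (μ.map B) := Measure.isProbabilityMeasure_map hBmeas.aemeasurable
  haveI : IsProbabilityMeasure (μ.map S) := Measure.isProbabilityMeasure_map hSmeas.aemeasurable
  have hmap : μ.map (fun ω => (B ω, S ω)) = (μ.map B).prod (μ.map S) :=
    (indepFun_iff_map_prod_eq_prod_map_map hBmeas.aemeasurable hSmeas.aemeasurable).mp hindep
  have part1 : ∀ u : EuclideanSpace ℝ (Fin d),
      ∫ ω, Complex.exp (Complex.I *
          (inner ℝ ((-Real.log (B ω)) ^ (1/α) • S ω) u : ℝ)) ∂μ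
        = (realBeta (β + ‖u‖ ^ α) γ / realBeta β γ : ℝ) := by
    intro u
    set t : ℝ := ‖u‖ ^ α with htdef
    have ht : 0 ≤ t := Real.rpow_nonneg (norm_nonneg u) α
    set F : ℝ × EuclideanSpace ℝ (Fin d) → ℂ :=
      fun p => Complex.exp (Complex.I * ((c p.1 * inner ℝ p.2 u : ℝ) : ℂ)) with hF
    have hFmeas : Measurable F := by
      apply Measurable.cexp
      apply Measurable.const_mul
      exact Complex.measurable_ofReal.comp
        ((hcmeas.comp measurable_fst).mul
          ((continuous_snd.inner continuous_const).measurable))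
    have hFint : Integrable F ((μ.map B).prod (μ.map S)) := by
      apply Integrable.mono' (integrable_const 1) hFmeas.aestronglyMeasurable
      filter_upwards with p
      exact le_of_eq (norm_exp_I_mul_ofReal _)
    have hinner : ∀ b ∈ Set.Ioo (0:ℝ) 1,
        ∫ s, F (b, s) ∂(μ.map S) = ((b ^ t : ℝ) : ℂ) := by
      intro b hb
      have hlog : 0 ≤ -Real.log b := by
        have := Real.log_neg hb.1 hb.2
        linarith
      have hc0 : 0 ≤ c b := Real.rpow_nonneg hlog _
      have h1 : ∫ s, F (b, s) ∂(μ.map S)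
          = ∫ ω, Complex.exp (Complex.I * ((inner ℝ (S ω) ((c b) • u) : ℝ) : ℂ)) ∂μ := by
        rw [integral_map hSmeas.aemeasurable]
        · apply integral_congr_ae
          filter_upwards with ω
          rw [hF]
          simp only [real_inner_smul_right]
        · apply Measurable.aestronglyMeasurable
          apply Measurable.cexp
          apply Measurable.const_mul
          exact Complex.measurable_ofReal.comp
            (((Continuous.inner continuous_id continuous_const).measurable).const_mul (c b))
      rw [h1, hS ((c b) • u)]
      have h2 : ‖(c b) • u‖ ^ α = (-Real.log b) * t := by
        rw [norm_smul, Real.norm_eq_abs, abs_of_nonneg hc0,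
          Real.mul_rpow hc0 (norm_nonneg u), htdef, hc,
          ← Real.rpow_mul hlog, one_div_mul_cancel hα0.ne', Real.rpow_one]
      rw [h2]
      congr 1
      rw [Real.rpow_def_of_pos hb.1 t]
      congr 1
      ring
    have hae : ∀ᵐ b ∂(_root_.betaMeasure β γ), b ∈ Set.Ioo (0:ℝ) 1 := by
      rw [ae_iff]
      simpa [Set.compl_def] using betaMeasure_compl β γ
    calc ∫ ω, Complex.exp (Complex.I *
            (inner ℝ ((-Real.log (B ω)) ^ (1/α) • S ω) u : ℝ)) ∂μ
        = ∫ ω, F (B ω, S ω) ∂μ := by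
          apply integral_congr_ae
          filter_upwards with ω
          rw [hF]
          simp only [real_inner_smul_left, hc]
      _ = ∫ p, F p ∂(μ.map (fun ω => (B ω, S ω))) := by
          rw [integral_map (hBmeas.prodMk hSmeas).aemeasurable hFmeas.aestronglyMeasurable]
      _ = ∫ p, F p ∂((μ.map B).prod (μ.map S)) := by rw [hmap]
      _ = ∫ b, ∫ s, F (b, s) ∂(μ.map S) ∂(μ.map B) := integral_prod F hFint
      _ = ∫ b, ∫ s, F (b, s) ∂(μ.map S) ∂(_root_.betaMeasure β γ) := by rw [hB]
      _ = ∫ b, ((b ^ t : ℝ) : ℂ) ∂(_root_.betaMeasure β γ) := by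
          apply integral_congr_ae
          filter_upwards [hae] with b hb
          exact hinner b hb
      _ = ((∫ b, b ^ t ∂(_root_.betaMeasure β γ) : ℝ) : ℂ) := integral_ofReal
      _ = ((realBeta (β + t) γ / realBeta β γ : ℝ) : ℂ) := by
          rw [betaMeasure_moment hβ hγ ht]
  refine ⟨part1, ?_⟩
  intro N x z
  set η : Ω → EuclideanSpace ℝ (Fin d) := fun ω => (-Real.log (B ω)) ^ (1/α) • S ω with hη
  set e : EuclideanSpace ℝ (Fin d) → Ω → ℂ :=
    fun u ω => Complex.exp (Complex.I * ((inner ℝ (η ω) u : ℝ) : ℂ)) with he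
  have hηmeas : Measurable η :=
    ((Real.measurable_log.comp hBmeas).neg.pow_const _).smul hSmeas
  have hemeas : ∀ u, Measurable (e u) := by
    intro u
    apply Measurable.cexp
    apply Measurable.const_mul
    exact Complex.measurable_ofReal.comp
      ((Continuous.inner continuous_id continuous_const).measurable.comp hηmeas)
  have heint : ∀ u, Integrable (e u) μ := by
    intro u
    apply Integrable.mono' (integrable_const 1) (hemeas u).aestronglyMeasurable
    filter_upwards with ω
    exact le_of_eq (norm_exp_I_mul_ofReal _)
  have hKint : ∀ u, ∫ ω, e u ω ∂μ
      = (((realBeta (β + ‖u‖ ^ α) γ : ℝ) : ℂ) / ((realBeta β γ : ℝ) : ℂ)) := by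
    intro u
    rw [← Complex.ofReal_div]
    exact part1 u
  have hemul : ∀ (v w : EuclideanSpace ℝ (Fin d)) ω,
      e (v - w) ω = e v ω * (starRingEnd ℂ) (e w ω) := by
    intro v w ω
    rw [he]
    simp only
    rw [inner_sub_right, conj_exp_I_mul_ofReal, ← Complex.exp_add]
    congr 1
    push_cast
    ring
  have key : ((∑ i, ∑ j, z i * z j *
        (realBeta (β + ‖x i - x j‖ ^ α) γ / realBeta β γ) : ℝ) : ℂ)
      = ∫ ω, ((Complex.normSq (∑ i, (z i : ℂ) * e (x i) ω) : ℝ) : ℂ) ∂μ := by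
    push_cast
    have hterm : ∀ i j : Fin N, (z i : ℂ) * (z j : ℂ) *
          (((realBeta (β + ‖x i - x j‖ ^ α) γ : ℝ) : ℂ) / ((realBeta β γ : ℝ) : ℂ))
        = ∫ ω, (z i : ℂ) * (z j : ℂ) * e (x i - x j) ω ∂μ := by
      intro i j
      rw [integral_const_mul, hKint (x i - x j)]
    calc ∑ i, ∑ j, (z i : ℂ) * (z j : ℂ) *
            (((realBeta (β + ‖x i - x j‖ ^ α) γ : ℝ) : ℂ) / ((realBeta β γ : ℝ) : ℂ))
        = ∑ i, ∑ j, ∫ ω, (z i : ℂ) * (z j : ℂ) * e (x i - x j) ω ∂μ := by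
          exact Finset.sum_congr rfl fun i _ => Finset.sum_congr rfl fun j _ => hterm i j
      _ = ∫ ω, ∑ i, ∑ j, (z i : ℂ) * (z j : ℂ) * e (x i - x j) ω ∂μ := by
          rw [integral_finset_sum]
          · exact Finset.sum_congr rfl fun i _ => (integral_finset_sum _
              fun j _ => ((heint (x i - x j)).const_mul _)).symm
          · exact fun i _ => integrable_finset_sum _
              fun j _ => ((heint (x i - x j)).const_mul _)
      _ = ∫ ω, ((Complex.normSq (∑ i, (z i : ℂ) * e (x i) ω) : ℝ) : ℂ) ∂μ := by
          apply integral_congr_ae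
          filter_upwards with ω
          rw [← Complex.mul_conj, map_sum, Finset.sum_mul_sum]
          apply Finset.sum_congr rfl
          intro i _
          apply Finset.sum_congr rfl
          intro j _
          rw [hemul (x i) (x j) ω, map_mul]
          have : (starRingEnd ℂ) ((z j : ℂ)) = (z j : ℂ) := Complex.conj_ofReal _
          rw [this]
          ring
  have key2 : ((∑ i, ∑ j, z i * z j *
        (realBeta (β + ‖x i - x j‖ ^ α) γ / realBeta β γ) : ℝ) : ℂ)
      = ((∫ ω, Complex.normSq (∑ i, (z i : ℂ) * e (x i) ω) ∂μ : ℝ) : ℂ) :=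
    key.trans integral_ofReal
  have h0 : 0 ≤ ∫ ω, Complex.normSq (∑ i, (z i : ℂ) * e (x i) ω) ∂μ :=
    integral_nonneg fun ω => Complex.normSq_nonneg _
  have := Complex.ofReal_inj.mp key2
  linarith
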